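/- Applicative similarity for the fine-grain call-by-value combinatory logic xCL_fg is sound for the contextual preorder: for all terms p,q of the same sort, if p ≲app q then p ≲ctx q. -/

import Mathlib

namespace FG

mutual
/-- Values of the fine-grain call-by-value combinatory logic xCL_fg. -/
inductive V : Type
  | I : V
  | K : V
  | S : V
  | K1 (t : C) : V
  | S1 (t : C) : V
  | S2 (s t : C) : V
/-- Computations of xCL_fg. -/
inductive C : Type
  | ret (v : V) : C            -- [v]
  | bull (t s : C) : C         -- t • s
  | rtri (v : V) (s : C) : C   -- v ▷ s
  | ltri (t : C) (v : V) : C   -- t ◁ v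
  | circ (v w : V) : C         -- v ∘ w
end

/-- Labeled transitions `v —u→ t` from values to computations (`LStep v u t`). -/
inductive LStep : V → V → C → Prop
  | S (v : V) : LStep .S v (.ret (.S1 (.ret v)))
  | S1 (t : C) (v : V) : LStep (.S1 t) v (.ret (.S2 t (.ret v)))
  | S2 (t s : C) (v : V) : LStep (.S2 t s) v (.bull (.ltri t v) (.ltri s v))
  | K (v : V) : LStep .K v (.ret (.K1 (.ret v)))
  | K1 (t : C) (v : V) : LStep (.K1 t) v t
  | I (v : V) : LStep .I v (.ret v)

/-- Unlabeled transitions from computations to values: `t → v`. -/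
inductive StepV : C → V → Prop
  | ret (v : V) : StepV (.ret v) v

/-- Unlabeled transitions from computations to computations: `t → t'`. -/
inductive StepC : C → C → Prop
  | bullL {t t' : C} (s : C) : StepC t t' → StepC (.bull t s) (.bull t' s)
  | bullV {t : C} {v : V} (s : C) : StepV t v → StepC (.bull t s) (.rtri v s)
  | ltriL {t t' : C} (v : V) : StepC t t' → StepC (.ltri t v) (.ltri t' v)
  | ltriV {t : C} {v : V} (w : V) : StepV t v → StepC (.ltri t w) (.circ v w)
  | rtriR {s s' : C} (v : V) : StepC s s' → StepC (.rtri v s) (.rtri v s')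
  | rtriV {s : C} {w : V} (v : V) : StepV s w → StepC (.rtri v s) (.circ v w)
  | circ {v w : V} {t : C} : LStep v w t → StepC (.circ v w) t

/-- `t ⇒ t'` between computations. -/
def StepsC : C → C → Prop := Relation.ReflTransGen StepC

/-- `t ⇒ v`: `t` reduces in finitely many steps to the value `v`. -/
def StepsV (t : C) (v : V) : Prop := ∃ t', StepsC t t' ∧ StepV t' v

/-- `t⇓`: the computation `t` reduces to some value. -/
def ConvC (t : C) : Prop := ∃ v, StepsV t v

/-- Applicative simulations for xCL_fg. -/
def IsSim (RV : V → V → Prop) (RC : C → C → Prop) : Prop :=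
  (∀ v w, RV v w → ∀ u t, LStep v u t → ∃ s, LStep w u s ∧ RC t s) ∧
  (∀ t s, RC t s →
    (∀ v, StepV t v → ∃ w, StepsV s w ∧ RV v w) ∧
    (∀ t', StepC t t' → ∃ s', StepsC s s' ∧ RC t' s'))

/-- Applicative similarity on values. -/
def AppSimV (v w : V) : Prop := ∃ RV RC, IsSim RV RC ∧ RV v w

/-- Applicative similarity on computations. -/
def AppSimC (t s : C) : Prop := ∃ RV RC, IsSim RV RC ∧ RC t s

/-- A sorted relation is a congruence if it is compatible with all operators of both sorts. -/
def IsCong (RV : V → V → Prop) (RC : C → C → Prop) : Prop :=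
  RV .S .S ∧ RV .K .K ∧ RV .I .I ∧
  (∀ t s, RC t s → RV (.K1 t) (.K1 s)) ∧
  (∀ t s, RC t s → RV (.S1 t) (.S1 s)) ∧
  (∀ t s t' s', RC t s → RC t' s' → RV (.S2 t t') (.S2 s s')) ∧
  (∀ v w, RV v w → RC (.ret v) (.ret w)) ∧
  (∀ t s t' s', RC t s → RC t' s' → RC (.bull t t') (.bull s s')) ∧
  (∀ v w t s, RV v w → RC t s → RC (.rtri v t) (.rtri w s)) ∧
  (∀ v w t s, RV v w → RC t s → RC (.ltri t v) (.ltri s w)) ∧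
  (∀ v w v' w', RV v w → RV v' w' → RC (.circ v v') (.circ w w'))

/-- Containment in the preorder `O` (the value component of `O` is total). -/
def SubO (RV : V → V → Prop) (RC : C → C → Prop) : Prop :=
  (∀ v w, RV v w → True) ∧ (∀ t s, RC t s → ConvC t → ConvC s)

/-- The contextual preorder (value sort): the greatest congruence contained in `O`. -/
def CtxLeV (v w : V) : Prop := ∃ RV RC, IsCong RV RC ∧ SubO RV RC ∧ RV v w

/-- The contextual preorder (computation sort). -/
def CtxLeC (t s : C) : Prop := ∃ RV RC, IsCong RV RC ∧ SubO RV RC ∧ RC t s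

/-- The step-indexed approximations `Lⁿ = (Lⁿ_v, Lⁿ_c)`. -/
def LrelN : ℕ → (V → V → Prop) × (C → C → Prop)
  | 0 => (fun _ _ => True, fun _ _ => True)
  | n+1 =>
    ( fun v w => ∀ u z, (LrelN n).1 u z → ∀ t, LStep v u t →
        ∃ s, LStep w z s ∧ (LrelN n).2 t s,
      fun t s =>
        (∀ v, StepV t v → ∃ w, StepsV s w ∧ (LrelN n).1 v w) ∧
        (∀ t', StepC t t' → ∃ s', StepsC s s' ∧ (LrelN n).2 t' s') )

/-- The step-indexed logical relation, value sort: `L_v = ⋂ₙ Lⁿ_v`. -/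
def LV (v w : V) : Prop := ∀ n, (LrelN n).1 v w

/-- The step-indexed logical relation, computation sort: `L_c = ⋂ₙ Lⁿ_c`. -/
def LC (t s : C) : Prop := ∀ n, (LrelN n).2 t s

end FG

namespace FGX
open FG

/-- Cumulative step-indexed logical relation. -/
def Q : ℕ → (V → V → Prop) × (C → C → Prop)
  | 0 => (fun _ _ => True, fun _ _ => True)
  | n+1 =>
    ( fun v w => (Q n).1 v w ∧ ∀ u z, (Q n).1 u z → ∀ t, LStep v u t →
        ∃ s, LStep w z s ∧ (Q n).2 t s,
      fun t s => (Q n).2 t s ∧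
        (∀ v, StepV t v → ∃ w, StepsV s w ∧ (Q n).1 v w) ∧
        (∀ t', StepC t t' → ∃ s', StepsC s s' ∧ (Q n).2 t' s') )

def QV (n : ℕ) : V → V → Prop := (Q n).1
def QC (n : ℕ) : C → C → Prop := (Q n).2

theorem QV0 (v w : V) : QV 0 v w := trivial
theorem QC0 (t s : C) : QC 0 t s := trivial

theorem QV_succ {n v w} : QV (n+1) v w ↔
    (QV n v w ∧ ∀ u z, QV n u z → ∀ t, LStep v u t →
        ∃ s, LStep w z s ∧ QC n t s) := Iff.rfl

theorem QC_succ {n t s} : QC (n+1) t s ↔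
    (QC n t s ∧
      (∀ v, StepV t v → ∃ w, StepsV s w ∧ QV n v w) ∧
      (∀ t', StepC t t' → ∃ s', StepsC s s' ∧ QC n t' s')) := Iff.rfl

structure Pk (n : ℕ) : Prop where
  pret : ∀ v w, QV n v w → QC n (.ret v) (.ret w)
  pcirc : ∀ v w v' w', QV n v w → QV n v' w' → QC n (.circ v v') (.circ w w')
  pltri : ∀ t s v w, QC n t s → QV n v w → QC n (.ltri t v) (.ltri s w)
  prtri : ∀ v w t s, QV n v w → QC n t s → QC n (.rtri v t) (.rtri w s)
  pbull : ∀ t s t' s', QC n t s → QC n t' s' → QC n (.bull t t') (.bull s s')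
  pk1 : ∀ t s, QC n t s → QV n (.K1 t) (.K1 s)
  ps1 : ∀ t s, QC n t s → QV n (.S1 t) (.S1 s)
  ps2 : ∀ t s t' s', QC n t s → QC n t' s' → QV n (.S2 t t') (.S2 s s')
  pS : QV n .S .S
  pK : QV n .K .K
  pI : QV n .I .I

theorem stepsC_ltri {t t' : C} (v : V) (h : StepsC t t') :
    StepsC (.ltri t v) (.ltri t' v) :=
  Relation.ReflTransGen.lift (fun x => C.ltri x v) (fun _ _ h => StepC.ltriL v h) _ _ h

theorem stepsC_rtri {t t' : C} (v : V) (h : StepsC t t') :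
    StepsC (.rtri v t) (.rtri v t') :=
  Relation.ReflTransGen.lift (fun x => C.rtri v x) (fun _ _ h => StepC.rtriR v h) _ _ h

theorem stepsC_bull {t t' : C} (s : C) (h : StepsC t t') :
    StepsC (.bull t s) (.bull t' s) :=
  Relation.ReflTransGen.lift (fun x => C.bull x s) (fun _ _ h => StepC.bullL s h) _ _ h

theorem pk : ∀ n, Pk n := by
  intro n
  induction n with
  | zero => exact ⟨fun _ _ _ => trivial, fun _ _ _ _ _ _ => trivial,
      fun _ _ _ _ _ _ => trivial, fun _ _ _ _ _ _ => trivial,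
      fun _ _ _ _ _ _ => trivial, fun _ _ _ => trivial, fun _ _ _ => trivial,
      fun _ _ _ _ _ _ => trivial, trivial, trivial, trivial⟩
  | succ n ih =>
    refine ⟨?_, ?_, ?_, ?_, ?_, ?_, ?_, ?_, ?_, ?_, ?_⟩
    · -- ret
      intro v w hvw
      refine QC_succ.mpr ⟨ih.pret _ _ (QV_succ.mp hvw).1, ?_, ?_⟩
      · intro v' hv'; cases hv'
        exact ⟨w, ⟨.ret w, Relation.ReflTransGen.refl, .ret w⟩, (QV_succ.mp hvw).1⟩
      · intro t' ht'; cases ht'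
    · -- circ
      intro v w v' w' h h'
      refine QC_succ.mpr ⟨ih.pcirc _ _ _ _ (QV_succ.mp h).1 (QV_succ.mp h').1, ?_, ?_⟩
      · intro v₀ h₀; cases h₀
      · intro t' ht'
        cases ht' with
        | circ hl =>
          obtain ⟨s, hs, hq⟩ := (QV_succ.mp h).2 _ _ (QV_succ.mp h').1 _ hl
          exact ⟨s, Relation.ReflTransGen.single (.circ hs), hq⟩
    · -- ltri
      intro t s v w ht hv
      refine QC_succ.mpr ⟨ih.pltri _ _ _ _ (QC_succ.mp ht).1 (QV_succ.mp hv).1, ?_, ?_⟩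
      · intro v₀ h₀; cases h₀
      · intro t' ht'
        cases ht' with
        | ltriL _ hstep =>
          obtain ⟨s₁, hs₁, hq⟩ := (QC_succ.mp ht).2.2 _ hstep
          exact ⟨.ltri s₁ w, stepsC_ltri w hs₁, ih.pltri _ _ _ _ hq (QV_succ.mp hv).1⟩
        | ltriV _ hstep =>
          obtain ⟨w₁, ⟨s₂, hs₂, hsv⟩, hq⟩ := (QC_succ.mp ht).2.1 _ hstep
          exact ⟨.circ w₁ w, (stepsC_ltri w hs₂).tail (.ltriV w hsv),
            ih.pcirc _ _ _ _ hq (QV_succ.mp hv).1⟩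
    · -- rtri
      intro v w t s hv ht
      refine QC_succ.mpr ⟨ih.prtri _ _ _ _ (QV_succ.mp hv).1 (QC_succ.mp ht).1, ?_, ?_⟩
      · intro v₀ h₀; cases h₀
      · intro t' ht'
        cases ht' with
        | rtriR _ hstep =>
          obtain ⟨s₁, hs₁, hq⟩ := (QC_succ.mp ht).2.2 _ hstep
          exact ⟨.rtri w s₁, stepsC_rtri w hs₁, ih.prtri _ _ _ _ (QV_succ.mp hv).1 hq⟩
        | rtriV _ hstep =>
          obtain ⟨w₁, ⟨s₂, hs₂, hsv⟩, hq⟩ := (QC_succ.mp ht).2.1 _ hstep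
          exact ⟨.circ w w₁, (stepsC_rtri w hs₂).tail (.rtriV w hsv),
            ih.pcirc _ _ _ _ (QV_succ.mp hv).1 hq⟩
    · -- bull
      intro t s t' s' ht ht'
      refine QC_succ.mpr ⟨ih.pbull _ _ _ _ (QC_succ.mp ht).1 (QC_succ.mp ht').1, ?_, ?_⟩
      · intro v₀ h₀; cases h₀
      · intro t₀ h₀
        cases h₀ with
        | bullL _ hstep =>
          obtain ⟨s₁, hs₁, hq⟩ := (QC_succ.mp ht).2.2 _ hstep
          exact ⟨.bull s₁ s', stepsC_bull s' hs₁, ih.pbull _ _ _ _ hq (QC_succ.mp ht').1⟩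
        | bullV _ hstep =>
          obtain ⟨w₁, ⟨s₂, hs₂, hsv⟩, hq⟩ := (QC_succ.mp ht).2.1 _ hstep
          exact ⟨.rtri w₁ s', (stepsC_bull s' hs₂).tail (.bullV s' hsv),
            ih.prtri _ _ _ _ hq (QC_succ.mp ht').1⟩
    · -- K1
      intro t s h
      refine QV_succ.mpr ⟨ih.pk1 _ _ (QC_succ.mp h).1, ?_⟩
      intro u z huz t₀ hstep
      cases hstep
      exact ⟨s, .K1 s z, (QC_succ.mp h).1⟩
    · -- S1
      intro t s h
      refine QV_succ.mpr ⟨ih.ps1 _ _ (QC_succ.mp h).1, ?_⟩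
      intro u z huz t₀ hstep
      cases hstep
      exact ⟨_, .S1 s z, ih.pret _ _ (ih.ps2 _ _ _ _ (QC_succ.mp h).1 (ih.pret _ _ huz))⟩
    · -- S2
      intro t s t' s' h h'
      refine QV_succ.mpr ⟨ih.ps2 _ _ _ _ (QC_succ.mp h).1 (QC_succ.mp h').1, ?_⟩
      intro u z huz t₀ hstep
      cases hstep
      exact ⟨_, .S2 s s' z,
        ih.pbull _ _ _ _ (ih.pltri _ _ _ _ (QC_succ.mp h).1 huz)
          (ih.pltri _ _ _ _ (QC_succ.mp h').1 huz)⟩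
    · -- S
      refine QV_succ.mpr ⟨ih.pS, ?_⟩
      intro u z huz t₀ hstep
      cases hstep
      exact ⟨_, .S z, ih.pret _ _ (ih.ps1 _ _ (ih.pret _ _ huz))⟩
    · -- K
      refine QV_succ.mpr ⟨ih.pK, ?_⟩
      intro u z huz t₀ hstep
      cases hstep
      exact ⟨_, .K z, ih.pret _ _ (ih.pk1 _ _ (ih.pret _ _ huz))⟩
    · -- I
      refine QV_succ.mpr ⟨ih.pI, ?_⟩
      intro u z huz t₀ hstep
      cases hstep
      exact ⟨_, .I z, ih.pret _ _ huz⟩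

mutual
theorem reflV : ∀ (v : V) (n : ℕ), QV n v v
  | .I, n => (pk n).pI
  | .K, n => (pk n).pK
  | .S, n => (pk n).pS
  | .K1 t, n => (pk n).pk1 t t (reflC t n)
  | .S1 t, n => (pk n).ps1 t t (reflC t n)
  | .S2 t s, n => (pk n).ps2 t t s s (reflC t n) (reflC s n)

theorem reflC : ∀ (t : C) (n : ℕ), QC n t t
  | .ret v, n => (pk n).pret v v (reflV v n)
  | .bull t s, n => (pk n).pbull _ _ _ _ (reflC t n) (reflC s n)
  | .rtri v s, n => (pk n).prtri _ _ _ _ (reflV v n) (reflC s n)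
  | .ltri t v, n => (pk n).pltri _ _ _ _ (reflC t n) (reflV v n)
  | .circ v w, n => (pk n).pcirc _ _ _ _ (reflV v n) (reflV w n)
end

/-- Multi-step simulation. -/
theorem simSteps {RV RC} (hS : IsSim RV RC) {t t₁ : C} (h : StepsC t t₁) :
    ∀ s, RC t s → ∃ s₁, StepsC s s₁ ∧ RC t₁ s₁ := by
  induction h with
  | refl => exact fun s hs => ⟨s, Relation.ReflTransGen.refl, hs⟩
  | tail _ hstep ih =>
    intro s hs
    obtain ⟨s₁, hs₁, hr₁⟩ := ih s hs
    obtain ⟨s₂, hs₂, hr₂⟩ := ((hS.2 _ _ hr₁).2 _ hstep)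
    exact ⟨s₂, hs₁.trans hs₂, hr₂⟩

/-- The master composition lemma. -/
theorem master {RV RC} (hS : IsSim RV RC) :
    ∀ n, (∀ v v₀ w, QV n v v₀ → RV v₀ w → QV n v w) ∧
          (∀ t t₀ s, QC n t t₀ → RC t₀ s → QC n t s) := by
  intro n
  induction n with
  | zero => exact ⟨fun _ _ _ _ _ => trivial, fun _ _ _ _ _ => trivial⟩
  | succ n ih =>
    constructor
    · intro v v₀ w hv hr
      refine QV_succ.mpr ⟨ih.1 _ _ _ (QV_succ.mp hv).1 hr, ?_⟩
      intro u z huz t ht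
      obtain ⟨t₀', h₀, hq⟩ := (QV_succ.mp hv).2 u z huz t ht
      obtain ⟨s, hs, hrc⟩ := hS.1 _ _ hr _ _ h₀
      exact ⟨s, hs, ih.2 _ _ _ hq hrc⟩
    · intro t t₀ s ht hr
      refine QC_succ.mpr ⟨ih.2 _ _ _ (QC_succ.mp ht).1 hr, ?_, ?_⟩
      · intro v hv
        obtain ⟨w₀, ⟨t₁, ht₁, hstep⟩, hq⟩ := (QC_succ.mp ht).2.1 v hv
        obtain ⟨s₁, hss, hrc₁⟩ := simSteps hS ht₁ s hr
        obtain ⟨w, ⟨s₂, hs₂, hs₂v⟩, hrvw⟩ := (hS.2 _ _ hrc₁).1 w₀ hstep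
        exact ⟨w, ⟨s₂, hss.trans hs₂, hs₂v⟩, ih.1 _ _ _ hq hrvw⟩
      · intro t' ht'
        obtain ⟨t₀', hsteps, hq⟩ := (QC_succ.mp ht).2.2 t' ht'
        obtain ⟨s', hss', hrc'⟩ := simSteps hS hsteps s hr
        exact ⟨s', hss', ih.2 _ _ _ hq hrc'⟩

/-- Step chains with explicit length. -/
inductive StepsCN : ℕ → C → C → Prop
  | refl (t : C) : StepsCN 0 t t
  | head {t t' t'' : C} {n : ℕ} : StepC t t' → StepsCN n t' t'' → StepsCN (n+1) t t''

theorem stepsCN_of {t t' : C} (h : StepsC t t') : ∃ n, StepsCN n t t' := by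
  induction h using Relation.ReflTransGen.head_induction_on with
  | refl => exact ⟨0, .refl _⟩
  | head hstep _ ih =>
    obtain ⟨n, hn⟩ := ih
    exact ⟨n+1, .head hstep hn⟩

theorem adeq : ∀ {n : ℕ} {t t₁ : C}, StepsCN n t t₁ → ∀ v, StepV t₁ v →
    ∀ s, QC (n+1) t s → ConvC s := by
  intro n t t₁ h
  induction h with
  | refl t =>
    intro v hv s hq
    obtain ⟨w, hw, _⟩ := (QC_succ.mp hq).2.1 v hv
    exact ⟨w, hw⟩
  | head hstep _ ih =>
    intro v hv s hq
    obtain ⟨s', hss', hq'⟩ := (QC_succ.mp hq).2.2 _ hstep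
    obtain ⟨w, s₂, h₁, h₂⟩ := ih v hv s' hq'
    exact ⟨w, s₂, hss'.trans h₁, h₂⟩

def RVfin (v w : V) : Prop := ∀ n, QV n v w
def RCfin (t s : C) : Prop := ∀ n, QC n t s

theorem cong_fin : IsCong RVfin RCfin :=
  ⟨fun n => (pk n).pS, fun n => (pk n).pK, fun n => (pk n).pI,
   fun t s h n => (pk n).pk1 t s (h n),
   fun t s h n => (pk n).ps1 t s (h n),
   fun t s t' s' h h' n => (pk n).ps2 t s t' s' (h n) (h' n),
   fun v w h n => (pk n).pret v w (h n),
   fun t s t' s' h h' n => (pk n).pbull t s t' s' (h n) (h' n),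
   fun v w t s h h' n => (pk n).prtri v w t s (h n) (h' n),
   fun v w t s h h' n => (pk n).pltri t s v w (h' n) (h n),
   fun v w v' w' h h' n => (pk n).pcirc v w v' w' (h n) (h' n)⟩

theorem subO_fin : SubO RVfin RCfin := by
  refine ⟨fun _ _ _ => trivial, ?_⟩
  rintro t s hts ⟨v, t₁, hsteps, hv⟩
  obtain ⟨n, hn⟩ := stepsCN_of hsteps
  exact adeq hn v hv s (hts (n+1))

end FGX


open FG in
/-- Applicative similarity for xCL_fg is sound for the contextual preorder. -/
theorem fg_appSim_sound :
    (∀ v w : V, AppSimV v w → CtxLeV v w) ∧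
    (∀ t s : C, AppSimC t s → CtxLeC t s) := by
  constructor
  · rintro v w ⟨RV, RC, hS, hvw⟩
    exact ⟨FGX.RVfin, FGX.RCfin, FGX.cong_fin, FGX.subO_fin,
      fun n => (FGX.master hS n).1 v v w (FGX.reflV v n) hvw⟩
  · rintro t s ⟨RV, RC, hS, hts⟩
    exact ⟨FGX.RVfin, FGX.RCfin, FGX.cong_fin, FGX.subO_fin,
      fun n => (FGX.master hS n).2 t t s (FGX.reflC t n) hts⟩
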